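/- If (A) and the finite MSP hold, then for every finite subset A ⊆ Σ, λ(A) = Ā, i.e., the λ-closure of a finite set equals its set of superpositions. -/

import Mathlib

universe u v

/-- A state property system: states, a complete lattice of properties, and
the actuality map `xi` assigning to each state the set of actual properties. -/
structure SPS (σ : Type u) (L : Type v) [CompleteLattice L] where
  xi : σ → Set L
  top_mem : ∀ p, ⊤ ∈ xi p
  bot_not_mem : ∀ p, ⊥ ∉ xi p
  sInf_mem : ∀ (p : σ) (A : Set L), (∀ a ∈ A, a ∈ xi p) ↔ sInf A ∈ xi p
  le_iff : ∀ a b : L, a ≤ b ↔ ∀ r, a ∈ xi r → b ∈ xi r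

variable {σ : Type u} {L : Type v} [CompleteLattice L]

/-- λ{p,q} : the set of superpositions of the pair p, q. -/
def SPS.lamPair (S : SPS σ L) (p q : σ) : Set σ := {s | S.xi p ∩ S.xi q ⊆ S.xi s}

/-- A set is λ-closed if it contains λ{p,q} for each pair of its points. -/
def SPS.lamClosed (S : SPS σ L) (T : Set σ) : Prop :=
  ∀ p ∈ T, ∀ q ∈ T, S.lamPair p q ⊆ T

/-- λ(P) : the intersection of all λ-closed sets containing P. -/
def SPS.lam (S : SPS σ L) (P : Set σ) : Set σ :=
  ⋂₀ {G | S.lamClosed G ∧ P ⊆ G}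

/-- The set of superpositions of a set of states. -/
def SPS.bar (S : SPS σ L) (T : Set σ) : Set σ :=
  {p | (⋂ s ∈ T, S.xi s) ⊆ S.xi p}

/-- Property (A): at least two states and `xi` order-reflecting (injective). -/
def SPS.propA (S : SPS σ L) : Prop :=
  (∃ p q : σ, p ≠ q) ∧ ∀ p q : σ, S.xi p ⊆ S.xi q → p = q

/-- p is a minimal superposition of A. -/
def SPS.minSup (S : SPS σ L) (A : Set σ) (p : σ) : Prop :=
  p ∈ S.bar A ∧ ∀ Q : Set σ, Q ⊂ A → p ∉ S.bar Q

/-- The minimal superposition principle for a given set A. -/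
def SPS.MSPon (S : SPS σ L) (A : Set σ) : Prop :=
  ∀ p : σ, S.minSup A p →
    ∀ S₁ S₂ : Set σ, S₁ ⊂ A → S₂ ⊂ A → S₁ ∩ S₂ = ∅ → S₁ ∪ S₂ = A →
      (S.bar (S₁ ∪ {p}) ∩ S.bar S₂).Nonempty

/-- n-MSP : MSP for all sets of cardinality at most n. -/
def SPS.nMSP (S : SPS σ L) (n : ℕ) : Prop :=
  ∀ A : Set σ, A.Finite → A.ncard ≤ n → S.MSPon A

/-- f-MSP : MSP for all finite sets. -/
def SPS.fMSP (S : SPS σ L) : Prop := ∀ A : Set σ, A.Finite → S.MSPon A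

lemma SPS.subset_bar (S : SPS σ L) (A : Set σ) : A ⊆ S.bar A := by
  intro s hs x hx
  simp only [Set.mem_iInter] at hx
  exact hx s hs

lemma SPS.bar_mono (S : SPS σ L) {A B : Set σ} (h : A ⊆ B) : S.bar A ⊆ S.bar B := by
  intro p hp x hx
  apply hp
  simp only [Set.mem_iInter] at hx ⊢
  exact fun s hs => hx s (h hs)

lemma SPS.bar_empty (S : SPS σ L) : S.bar (∅ : Set σ) = ∅ := by
  ext p
  simp only [SPS.bar, Set.mem_setOf_eq, Set.mem_empty_iff_false, iff_false]
  intro h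
  exact S.bot_not_mem p (h (by simp))

lemma SPS.bar_singleton (S : SPS σ L) (hA : S.propA) (q : σ) :
    S.bar {q} = {q} := by
  ext x
  simp only [SPS.bar, Set.mem_setOf_eq, Set.mem_singleton_iff, Set.iInter_iInter_eq_left]
  constructor
  · intro h
    exact (hA.2 q x h).symm
  · intro h
    subst h
    exact subset_rfl

lemma SPS.mem_bar_pair (S : SPS σ L) (a b x : σ) :
    x ∈ S.bar ({a} ∪ {b}) ↔ S.xi a ∩ S.xi b ⊆ S.xi x := by
  simp only [SPS.bar, Set.mem_setOf_eq, Set.biInter_union, Set.biInter_singleton]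

lemma SPS.subset_lam (S : SPS σ L) (A : Set σ) : A ⊆ S.lam A := by
  intro x hx
  exact Set.mem_sInter.mpr fun G hG => hG.2 hx

lemma SPS.lam_mono (S : SPS σ L) {A B : Set σ} (h : A ⊆ B) : S.lam A ⊆ S.lam B := by
  intro x hx
  exact Set.mem_sInter.mpr fun G hG => Set.mem_sInter.mp hx G ⟨hG.1, h.trans hG.2⟩

lemma SPS.lamClosed_lam (S : SPS σ L) (A : Set σ) : S.lamClosed (S.lam A) := by
  intro p hp q hq s hs
  exact Set.mem_sInter.mpr fun G hG =>
    hG.1 p (Set.mem_sInter.mp hp G hG) q (Set.mem_sInter.mp hq G hG) hs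

lemma SPS.lamClosed_bar (S : SPS σ L) (A : Set σ) : S.lamClosed (S.bar A) := by
  intro p hp q hq s hs x hx
  exact hs ⟨hp hx, hq hx⟩

lemma SPS.lam_subset_bar (S : SPS σ L) (A : Set σ) : S.lam A ⊆ S.bar A :=
  Set.sInter_subset_of_mem ⟨S.lamClosed_bar A, S.subset_bar A⟩

lemma SPS.bar_shrink (S : SPS σ L) {A : Set σ} {a p : σ} (ha : a ∈ A)
    (haa : a ∈ S.bar (A \ {a})) (hp : p ∈ S.bar A) : p ∈ S.bar (A \ {a}) := by
  intro x hx
  apply hp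
  simp only [Set.mem_iInter, Set.mem_diff, Set.mem_singleton_iff] at hx ⊢
  intro s hs
  by_cases hsa : s = a
  · subst hsa
    apply haa
    simp only [Set.mem_iInter, Set.mem_diff, Set.mem_singleton_iff]
    exact fun t ht => hx t ht
  · exact hx s ⟨hs, hsa⟩

lemma ssubset_pair {a b : σ} {Q : Set σ} (h : Q ⊂ ({a} ∪ {b} : Set σ)) :
    Q ⊆ {a} ∨ Q ⊆ {b} := by
  by_cases hab : a ∈ Q ∧ b ∈ Q
  · exfalso
    apply h.2
    intro x hx
    rcases hx with hx | hx
    · exact hx ▸ hab.1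
    · exact hx ▸ hab.2
  · rw [not_and_or] at hab
    rcases hab with hna | hnb
    · right
      intro x hx
      rcases h.1 hx with hx' | hx'
      · exact absurd (hx' ▸ hx) hna
      · exact hx'
    · left
      intro x hx
      rcases h.1 hx with hx' | hx'
      · exact hx'
      · exact absurd (hx' ▸ hx) hnb

theorem stmt7 (S : SPS σ L) (hA : S.propA) (hf : S.fMSP) :
    ∀ A : Set σ, A.Finite → S.lam A = S.bar A := by
  have key : ∀ n : ℕ, ∀ A : Set σ, A.Finite → A.ncard = n → S.bar A ⊆ S.lam A := by
    intro n
    induction n using Nat.strong_induction_on with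
    | _ n ih =>
      intro A hfin hcard p hp
      by_cases hex : ∃ B, B ⊂ A ∧ p ∈ S.bar B
      · obtain ⟨B, hBA, hpB⟩ := hex
        have hBfin : B.Finite := hfin.subset hBA.subset
        have hlt : B.ncard < n := hcard ▸ Set.ncard_lt_ncard hBA hfin
        exact S.lam_mono hBA.subset (ih _ hlt B hBfin rfl hpB)
      · push_neg at hex
        have hmin : S.minSup A p := ⟨hp, fun Q hQ => hex Q hQ⟩
        by_cases hpA : p ∈ A
        · exact S.subset_lam A hpA
        have hAne : A.Nonempty := by
          rcases Set.eq_empty_or_nonempty A with h | h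
          · rw [h, S.bar_empty] at hp
            exact absurd hp (Set.notMem_empty p)
          · exact h
        obtain ⟨a, ha⟩ := hAne
        have hAa : ¬ A ⊆ {a} := by
          intro h
          have hAeq : A = {a} := Set.Subset.antisymm h (Set.singleton_subset_iff.mpr ha)
          rw [hAeq, S.bar_singleton hA] at hp
          exact hpA (hAeq ▸ hp)
        have h1 : ({a} : Set σ) ⊂ A := ⟨Set.singleton_subset_iff.mpr ha, fun h => hAa h⟩
        have h2 : A \ {a} ⊂ A := ⟨Set.diff_subset, fun h => ((Set.mem_diff _).mp (h ha)).2 rfl⟩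
        have hdisj : ({a} : Set σ) ∩ (A \ {a}) = ∅ :=
          Set.singleton_inter_eq_empty.mpr (by simp)
        have hunion : ({a} : Set σ) ∪ (A \ {a}) = A :=
          Set.union_diff_cancel (Set.singleton_subset_iff.mpr ha)
        obtain ⟨r, hr1, hr2⟩ := hf A hfin p hmin {a} (A \ {a}) h1 h2 hdisj hunion
        have hpnot : p ∉ S.bar (A \ {a}) := hex _ h2
        have hrp : r ≠ p := fun h => hpnot (h ▸ hr2)
        have hra : r ≠ a := by
          intro h
          exact hpnot (S.bar_shrink ha (h ▸ hr2) hp)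
        have hmin2 : S.minSup ({a} ∪ {p}) r := by
          refine ⟨hr1, ?_⟩
          intro Q hQ hrQ
          rcases ssubset_pair hQ with h | h
          · have := S.bar_mono h hrQ
            rw [S.bar_singleton hA] at this
            exact hra this
          · have := S.bar_mono h hrQ
            rw [S.bar_singleton hA] at this
            exact hrp this
        have hap : a ≠ p := fun h => hpA (h ▸ ha)
        have hsa : ({a} : Set σ) ⊂ ({a} ∪ {p} : Set σ) := by
          refine ⟨Set.subset_union_left, fun h => ?_⟩
          exact hap (h (Set.mem_union_right _ rfl)).symm
        have hsp : ({p} : Set σ) ⊂ ({a} ∪ {p} : Set σ) := by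
          refine ⟨Set.subset_union_right, fun h => ?_⟩
          exact hap (h (Set.mem_union_left _ rfl))
        have hdisj2 : ({a} : Set σ) ∩ ({p} : Set σ) = ∅ := by
          ext x
          simp only [Set.mem_inter_iff, Set.mem_singleton_iff, Set.mem_empty_iff_false,
            iff_false, not_and]
          intro h h'
          exact hap (h ▸ h' ▸ rfl)
        obtain ⟨t, ht1, ht2⟩ := hf ({a} ∪ {p}) ((Set.finite_singleton a).union
          (Set.finite_singleton p)) r hmin2 {a} {p} hsa hsp hdisj2 rfl
        rw [S.bar_singleton hA] at ht2
        have hpbar : p ∈ S.bar ({a} ∪ {r}) := ht2 ▸ ht1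
        have haL : a ∈ S.lam A := S.subset_lam A ha
        have hrL : r ∈ S.lam A := by
          have hlt : (A \ {a}).ncard < n :=
            hcard ▸ Set.ncard_diff_singleton_lt_of_mem ha hfin
          exact S.lam_mono Set.diff_subset
            (ih _ hlt (A \ {a}) hfin.diff rfl hr2)
        exact S.lamClosed_lam A a haL r hrL ((S.mem_bar_pair a r p).mp hpbar)
  intro A hfin
  exact Set.Subset.antisymm (S.lam_subset_bar A) (key A.ncard A hfin rfl)
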